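/- Suppose the Fréchet derivative f' is uniformly continuous on C, the stepsizes (γ_k) are chosen by line minimization, and for some σ ∈ (1,2] the constant C > 0 is a finite curvature constant of order σ of f over C (i.e., f(x + γ(s−x)) ≤ f(x) + ⟨f'(x), γ(s−x)⟩ + (γ^σ/σ)·C for all x, s ∈ C, γ ∈ (0,1]). Then the sequence (x_k) generated by the Frank–Wolfe algorithm satisfies, for all k ≥ 1, f(x_k) − f* ≤ θ / (1 + (1/σ)·θ^{1/(σ−1)}·C^{1/(1−σ)}·k)^{σ−1}, where θ = f(x_0) − f*; in particular f(x_k) − f* = O(1/k^{σ−1}). -/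

import Mathlib

open Filter Topology Set

private lemma grad_ineq {X : Type*} [NormedAddCommGroup X] [NormedSpace ℝ X]
    (f : X → ℝ) (f' : X → X →L[ℝ] ℝ)
    (hfconv : ConvexOn ℝ Set.univ f)
    (hfderiv : ∀ x : X, HasFDerivAt f (f' x) x)
    (x y : X) : f' x (y - x) ≤ f y - f x := by
  set g : ℝ → ℝ := fun t => f (x + t • (y - x)) with hg
  have hline : HasDerivAt (fun t : ℝ => x + t • (y - x)) (y - x) 0 := by
    simpa using ((hasDerivAt_id (0:ℝ)).smul_const (y - x)).const_add x
  have hgd : HasDerivAt g (f' x (y - x)) 0 := by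
    have h0 : HasFDerivAt f (f' x) (x + (0:ℝ) • (y - x)) := by
      simpa using hfderiv x
    exact h0.comp_hasDerivAt 0 hline
  have hslope : Tendsto (slope g 0) (𝓝[>] 0) (𝓝 (f' x (y - x))) :=
    (hasDerivAt_iff_tendsto_slope.1 hgd).mono_left
      (nhdsWithin_mono 0 (fun t ht => ne_of_gt ht))
  refine le_of_tendsto hslope ?_
  filter_upwards [Ioc_mem_nhdsGT_of_mem (Set.left_mem_Ico.2 one_pos)] with t ht
  have hconv : f (x + t • (y - x)) ≤ (1 - t) * f x + t * f y := by
    have h := hfconv.2 (Set.mem_univ x) (Set.mem_univ y)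
      (by linarith [ht.2] : (0:ℝ) ≤ 1 - t) ht.1.le (by ring)
    have heq : (1 - t) • x + t • y = x + t • (y - x) := by module
    rw [heq] at h
    simpa [smul_eq_mul] using h
  have hg0 : g 0 = f x := by simp [hg]
  rw [slope_def_field]
  rw [div_le_iff₀ (by simpa using ht.1 : (0:ℝ) < t - 0)]
  have : g t = f (x + t • (y - x)) := rfl
  rw [this, hg0]
  nlinarith [hconv]

private lemma core_step (σ Cf θk θ' : ℝ) (hσ1 : 1 < σ) (hσ2 : σ ≤ 2) (hCf : 0 < Cf)
    (hθ' : 0 < θ') (hmono : θ' ≤ θk)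
    (H : ∀ g ∈ Set.Ioc (0:ℝ) 1, θ' ≤ θk - g * θk + g ^ σ / σ * Cf) :
    θk ^ (-(1/(σ-1))) + 1/σ * Cf ^ (-(1/(σ-1))) ≤ θ' ^ (-(1/(σ-1))) := by
  have hσ0 : (0:ℝ) < σ := by linarith
  have hs1 : (0:ℝ) < σ - 1 := by linarith
  set β := 1/(σ-1) with hβ
  have hβ0 : 0 < β := by rw [hβ]; positivity
  have hθk : 0 < θk := lt_of_lt_of_le hθ' hmono
  by_cases hbig : Cf < θk
  · have h1 := H 1 ⟨one_pos, le_refl 1⟩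
    rw [Real.one_rpow] at h1
    have h2 : θ' ≤ Cf / σ := by
      have : (1:ℝ)/σ*Cf = Cf/σ := by ring
      nlinarith [h1]
    have hA : (Cf/σ)^(-β) ≤ θ'^(-β) :=
      Real.rpow_le_rpow_of_nonpos hθ' h2 (by linarith)
    have hCfσ : (Cf/σ)^(-β) = Cf^(-β) * σ^β := by
      rw [Real.div_rpow hCf.le hσ0.le, Real.rpow_neg hσ0.le, div_eq_mul_inv, inv_inv]
    have hσβ : 1 + 1/σ ≤ σ ^ β := by
      have hlog : 1 - σ⁻¹ ≤ Real.log σ := by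
        have h := Real.log_le_sub_one_of_pos (inv_pos.2 hσ0)
        rw [Real.log_inv] at h; linarith
      have hrw : σ ^ β = Real.exp (Real.log σ * β) := Real.rpow_def_of_pos hσ0 β
      rw [hrw]
      have heq : (1 - σ⁻¹) * β = 1/σ := by rw [hβ]; field_simp
      have h1σ : 1/σ ≤ Real.log σ * β := by
        nlinarith [mul_le_mul_of_nonneg_right hlog hβ0.le]
      calc 1 + 1/σ ≤ Real.exp (1/σ) := by linarith [Real.add_one_le_exp (1/σ)]
        _ ≤ Real.exp (Real.log σ * β) := Real.exp_le_exp.2 h1σ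
    have hθkCf : θk^(-β) ≤ Cf^(-β) := Real.rpow_le_rpow_of_nonpos hCf hbig.le (by linarith)
    have hCfβ : 0 < Cf^(-β) := Real.rpow_pos_of_pos hCf _
    have hmul : Cf^(-β) * (1 + 1/σ) ≤ Cf^(-β) * σ^β :=
      mul_le_mul_of_nonneg_left hσβ hCfβ.le
    calc θk^(-β) + 1/σ*Cf^(-β) ≤ Cf^(-β) * σ^β := by nlinarith [hθkCf, hmul]
      _ = (Cf/σ)^(-β) := hCfσ.symm
      _ ≤ θ'^(-β) := hA
  · push_neg at hbig
    have hdiv : 0 < θk/Cf := div_pos hθk hCf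
    set g := (θk/Cf)^β with hgdef
    have hg0 : 0 < g := Real.rpow_pos_of_pos hdiv _
    have hg1 : g ≤ 1 := Real.rpow_le_one hdiv.le ((div_le_one hCf).2 hbig) hβ0.le
    have hH := H g ⟨hg0, hg1⟩
    have hkey : g ^ σ * Cf = g * θk := by
      have h1 : g ^ σ = (θk/Cf) ^ (β * σ) := by
        rw [hgdef]; exact (Real.rpow_mul hdiv.le β σ).symm
      have h2 : β * σ = β + 1 := by rw [hβ]; field_simp; ring
      rw [h1, h2, Real.rpow_add hdiv, Real.rpow_one, ← hgdef]
      field_simp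
    set a := (σ-1)/σ with ha
    have ha0 : 0 < a := by rw [ha]; positivity
    have ha1 : a < 1 := by rw [ha, div_lt_one hσ0]; linarith
    have hag : a * g < 1 := by nlinarith [mul_nonneg ha0.le (by linarith : (0:ℝ) ≤ 1 - g)]
    have hD : 0 < 1 - a*g := by linarith
    have hθ'le : θ' ≤ θk * (1 - a*g) := by
      have heq : θk - g*θk + g^σ/σ*Cf = θk*(1 - a*g) := by
        have h3 : g^σ/σ*Cf = g*θk/σ := by rw [div_mul_eq_mul_div, hkey]
        rw [h3, ha]; field_simp; ring
      rw [heq] at hH; exact hH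
    have hchain1 : (θk*(1-a*g))^(-β) ≤ θ'^(-β) :=
      Real.rpow_le_rpow_of_nonpos hθ' hθ'le (by linarith)
    have hmulr : (θk*(1-a*g))^(-β) = θk^(-β) * (1-a*g)^(-β) :=
      Real.mul_rpow hθk.le hD.le
    have hsub2 : (1 + g/σ) * (1-a*g)^β ≤ 1 := by
      have e1 : 1 - a*g ≤ Real.exp (-(a*g)) := by linarith [Real.add_one_le_exp (-(a*g))]
      have e2 : (1-a*g)^β ≤ Real.exp (-(a*g)) ^ β := Real.rpow_le_rpow hD.le e1 hβ0.le
      have e3 : Real.exp (-(a*g)) ^ β = Real.exp (-(g/σ)) := by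
        rw [← Real.exp_mul]; congr 1; rw [ha, hβ]; field_simp
      have e4 : 1 + g/σ ≤ Real.exp (g/σ) := by linarith [Real.add_one_le_exp (g/σ)]
      have hgσ : 0 ≤ g/σ := div_nonneg hg0.le hσ0.le
      calc (1 + g/σ) * (1-a*g)^β ≤ (1 + g/σ) * Real.exp (-(g/σ)) := by
            apply mul_le_mul_of_nonneg_left _ (by linarith : (0:ℝ) ≤ 1 + g/σ)
            exact e3 ▸ e2
        _ ≤ Real.exp (g/σ) * Real.exp (-(g/σ)) :=
            mul_le_mul_of_nonneg_right e4 (Real.exp_pos _).le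
        _ = 1 := by rw [← Real.exp_add]; simp
    have hp : 0 < (1-a*g)^β := Real.rpow_pos_of_pos hD _
    have hsub2' : 1 + g/σ ≤ (1-a*g)^(-β) := by
      rw [Real.rpow_neg hD.le, ← one_div, le_div_iff₀ hp]
      exact hsub2
    have hθkβne : θk ^ β ≠ 0 := (Real.rpow_pos_of_pos hθk β).ne'
    have hCfβne : Cf ^ β ≠ 0 := (Real.rpow_pos_of_pos hCf β).ne'
    have hclaim1 : θk^(-β) * g = Cf^(-β) := by
      rw [hgdef, Real.div_rpow hθk.le hCf.le, Real.rpow_neg hθk.le, Real.rpow_neg hCf.le]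
      field_simp
    have hθkβ : 0 < θk^(-β) := Real.rpow_pos_of_pos hθk _
    have hring : θk^(-β) + 1/σ*Cf^(-β) = θk^(-β)*(1+g/σ) := by
      rw [← hclaim1]; ring
    rw [hring]
    calc θk^(-β)*(1+g/σ) ≤ θk^(-β)*(1-a*g)^(-β) :=
          mul_le_mul_of_nonneg_left hsub2' hθkβ.le
      _ = (θk*(1-a*g))^(-β) := hmulr.symm
      _ ≤ θ'^(-β) := hchain1

/-- **Rate of convergence of the Frank–Wolfe algorithm with line minimization**
(Theorem 4.8). If `f'` is uniformly continuous on `C`, `Cf > 0` is a curvature constant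
of order `σ ∈ (1,2]` of `f` over `C`, and the stepsizes are chosen by line minimization,
then for all `k ≥ 1`,
`f(x_k) − f* ≤ θ / (1 + (1/σ) θ^{1/(σ−1)} Cf^{1/(1−σ)} k)^{σ−1}`, where
`θ = f(x_0) − f*`; in particular `f(x_k) − f* = O(1/k^{σ−1})`. -/
theorem stmt_12
    {X : Type*} [NormedAddCommGroup X] [NormedSpace ℝ X] [CompleteSpace X]
    (C : Set X) (hCne : C.Nonempty) (hCcl : IsClosed C)
    (hCbd : Bornology.IsBounded C) (hCcv : Convex ℝ C)
    (f : X → ℝ) (f' : X → X →L[ℝ] ℝ)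
    (hfconv : ConvexOn ℝ Set.univ f)
    (hfderiv : ∀ x : X, HasFDerivAt f (f' x) x)
    (hfUC : UniformContinuousOn f' C)
    (σ : ℝ) (hσ : σ ∈ Set.Ioc (1 : ℝ) 2)
    (Cf : ℝ) (hCf : 0 < Cf)
    (hcurv : ∀ x ∈ C, ∀ s ∈ C, ∀ γ ∈ Set.Ioc (0 : ℝ) 1,
      f (x + γ • (s - x)) ≤ f x + f' x (γ • (s - x)) + γ ^ σ / σ * Cf)
    (xstar : X) (hxstarC : xstar ∈ C) (hxstarmin : ∀ y ∈ C, f xstar ≤ f y)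
    (x xbar : ℕ → X) (γ : ℕ → ℝ)
    (hx0 : x 0 ∈ C)
    (hxbarC : ∀ k, xbar k ∈ C)
    (hxbarmin : ∀ k, ∀ y ∈ C, f' (x k) (xbar k) ≤ f' (x k) y)
    (hγ : ∀ k, γ k ∈ Set.Icc (0 : ℝ) 1)
    (hupdate : ∀ k, x (k + 1) = x k + γ k • (xbar k - x k))
    (hlinemin : ∀ k, ∀ γ' ∈ Set.Icc (0 : ℝ) 1,
      f (x k + γ k • (xbar k - x k)) ≤ f (x k + γ' • (xbar k - x k))) :
    ∀ k : ℕ, 1 ≤ k →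
      f (x k) - f xstar ≤
        (f (x 0) - f xstar) /
          (1 + 1 / σ * (f (x 0) - f xstar) ^ (1 / (σ - 1)) * Cf ^ (1 / (1 - σ)) * k)
            ^ (σ - 1) := by
  obtain ⟨hσ1, hσ2⟩ := hσ
  have hσ0 : (0:ℝ) < σ := by linarith
  have hs1 : (0:ℝ) < σ - 1 := by linarith
  -- iterates stay in C
  have hxC : ∀ k, x k ∈ C := by
    intro k
    induction k with
    | zero => exact hx0
    | succ n ih =>
      rw [hupdate n]
      have h := hCcv ih (hxbarC n)
        (by linarith [(hγ n).2] : (0:ℝ) ≤ 1 - γ n) (hγ n).1 (by ring)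
      have heq : x n + γ n • (xbar n - x n) = (1 - γ n) • x n + γ n • xbar n := by module
      rw [heq]; exact h
  -- monotonicity
  have hmono : ∀ k, f (x (k+1)) ≤ f (x k) := by
    intro k
    rw [hupdate k]
    have := hlinemin k 0 ⟨le_refl 0, zero_le_one⟩
    simpa using this
  have hanti : Antitone (fun k => f (x k)) := antitone_nat_of_succ_le hmono
  -- nonnegativity
  have hnn : ∀ k, 0 ≤ f (x k) - f xstar := fun k => by
    linarith [hxstarmin (x k) (hxC k)]
  -- descent recursion
  have hrec : ∀ k, ∀ g ∈ Set.Ioc (0:ℝ) 1,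
      f (x (k+1)) - f xstar ≤ (f (x k) - f xstar) - g * (f (x k) - f xstar) + g ^ σ / σ * Cf := by
    intro k g hg
    have h1 : f (x (k+1)) ≤ f (x k + g • (xbar k - x k)) := by
      rw [hupdate k]; exact hlinemin k g ⟨hg.1.le, hg.2⟩
    have h2 := hcurv (x k) (hxC k) (xbar k) (hxbarC k) g hg
    have h4 : f' (x k) (xbar k - x k) ≤ f' (x k) (xstar - x k) := by
      rw [map_sub, map_sub]
      have := hxbarmin k xstar hxstarC
      linarith
    have h5 : f' (x k) (xstar - x k) ≤ f xstar - f (x k) :=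
      grad_ineq f f' hfconv hfderiv (x k) xstar
    have h3 : f' (x k) (g • (xbar k - x k)) ≤ g * (f xstar - f (x k)) := by
      rw [map_smul, smul_eq_mul]
      exact mul_le_mul_of_nonneg_left (le_trans h4 h5) hg.1.le
    nlinarith [h1, h2, h3]
  intro k hk
  set θ0 := f (x 0) - f xstar with hθ0def
  set β := 1/(σ-1) with hβ
  have hβ0 : 0 < β := by rw [hβ]; positivity
  have hexp : (1:ℝ)/(1-σ) = -β := by
    rw [hβ, show (1:ℝ)-σ = -(σ-1) by ring, div_neg]
  rw [hexp]
  have hCfβ : 0 < Cf ^ (-β) := Real.rpow_pos_of_pos hCf _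
  have hθ0β : 0 ≤ θ0 ^ β := Real.rpow_nonneg (hnn 0) _
  have hbase : 0 < 1 + 1/σ * θ0 ^ β * Cf ^ (-β) * (k:ℝ) := by
    have : 0 ≤ 1/σ * θ0 ^ β * Cf ^ (-β) * (k:ℝ) := by positivity
    linarith
  have hden : 0 < (1 + 1/σ * θ0 ^ β * Cf ^ (-β) * (k:ℝ)) ^ (σ-1) :=
    Real.rpow_pos_of_pos hbase _
  by_cases hpos : 0 < f (x k) - f xstar
  · -- all earlier gaps positive
    have hθj : ∀ j, j ≤ k → 0 < f (x j) - f xstar := by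
      intro j hj
      have := hanti hj
      simp only at this
      linarith
    have claim : ∀ j, j ≤ k →
        θ0 ^ (-β) + (j:ℝ) * (1/σ * Cf ^ (-β)) ≤ (f (x j) - f xstar) ^ (-β) := by
      intro j
      induction j with
      | zero => intro _; simp [hθ0def]
      | succ n ih =>
        intro hle
        have hn : n ≤ k := Nat.le_of_succ_le hle
        have h1 := ih hn
        have h2 := core_step σ Cf (f (x n) - f xstar) (f (x (n+1)) - f xstar)
          hσ1 hσ2 hCf (hθj (n+1) hle) (by linarith [hmono n]) (hrec n)
        rw [← hβ] at h2
        push_cast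
        linarith
    have hKey := claim k (le_refl k)
    have hθ0pos : 0 < θ0 := hθj 0 (Nat.zero_le k)
    have hθkpos : 0 < f (x k) - f xstar := hpos
    have hθ0βpos : 0 < θ0 ^ (-β) := Real.rpow_pos_of_pos hθ0pos _
    have hprod : θ0 ^ (-β) * θ0 ^ β = 1 := by
      rw [Real.rpow_neg hθ0pos.le]
      exact inv_mul_cancel₀ (Real.rpow_pos_of_pos hθ0pos β).ne'
    have hKey2 : θ0 ^ (-β) * (1 + 1/σ * θ0 ^ β * Cf ^ (-β) * (k:ℝ))
        ≤ (f (x k) - f xstar) ^ (-β) := by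
      have : θ0 ^ (-β) * (1 + 1/σ * θ0 ^ β * Cf ^ (-β) * (k:ℝ))
          = θ0 ^ (-β) + (k:ℝ) * (1/σ * Cf ^ (-β)) := by
        have e : θ0 ^ (-β) * (1/σ * θ0 ^ β * Cf ^ (-β) * (k:ℝ))
            = (θ0 ^ (-β) * θ0 ^ β) * (1/σ * Cf ^ (-β) * (k:ℝ)) := by ring
        rw [mul_add, mul_one, e, hprod]; ring
      rw [this]; exact hKey
    set b := 1 + 1/σ * θ0 ^ β * Cf ^ (-β) * (k:ℝ) with hb
    have hLHSpos : 0 < θ0 ^ (-β) * b := mul_pos hθ0βpos hbase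
    have hpow := Real.rpow_le_rpow hLHSpos.le hKey2 hs1.le
    have hexp1 : (-β) * (σ-1) = -1 := by rw [hβ]; field_simp
    have hL : (θ0 ^ (-β) * b) ^ (σ-1) = θ0⁻¹ * b ^ (σ-1) := by
      rw [Real.mul_rpow (Real.rpow_nonneg hθ0pos.le _) hbase.le,
          ← Real.rpow_mul hθ0pos.le, hexp1, Real.rpow_neg_one]
    have hR : ((f (x k) - f xstar) ^ (-β)) ^ (σ-1) = (f (x k) - f xstar)⁻¹ := by
      rw [← Real.rpow_mul hθkpos.le, hexp1, Real.rpow_neg_one]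
    rw [hL, hR] at hpow
    rw [le_div_iff₀ hden]
    have h6 : (f (x k) - f xstar) * (θ0⁻¹ * b ^ (σ-1))
        ≤ (f (x k) - f xstar) * (f (x k) - f xstar)⁻¹ :=
      mul_le_mul_of_nonneg_left hpow hθkpos.le
    rw [mul_inv_cancel₀ hθkpos.ne'] at h6
    have h7 : (f (x k) - f xstar) * b ^ (σ-1)
        = θ0 * ((f (x k) - f xstar) * (θ0⁻¹ * b ^ (σ-1))) := by
      field_simp
    rw [h7]
    exact mul_le_of_le_one_right hθ0pos.le h6
  · push_neg at hpos
    refine le_trans hpos (div_nonneg (hnn 0) hden.le)
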